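/- Let K be a field of characteristic zero, d ≥ 2 an integer, and a₁, ..., a_d ∈ K algebraically independent over the prime field ℚ of K. Then the polynomial P(z) = a₁z + a₂z² + ... + a_d z^d has no parabolic periodic point: there is no z₀ ∈ K and n ≥ 1 with P^n(z₀) = z₀ and (P^n)'(z₀) a root of unity. -/

import Mathlib

/-- `n`-th iterate of a polynomial under composition. -/
noncomputable def polyIt {K : Type*} [CommRing K] (P : Polynomial K) : ℕ → Polynomial K
  | 0 => Polynomial.X
  | n + 1 => P.comp (polyIt P n)

section Aux

open Polynomial in
lemma polyIt_map {R S : Type*} [CommRing R] [CommRing S] (f : R →+* S) (P : R[X]) :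
    ∀ n, (polyIt P n).map f = polyIt (P.map f) n
  | 0 => by simp [polyIt]
  | n + 1 => by rw [polyIt, Polynomial.map_comp, polyIt_map f P n]; rfl

open Polynomial in
lemma polyIt_X_pow {R : Type*} [CommRing R] (d : ℕ) :
    ∀ n, polyIt (X ^ d : R[X]) n = X ^ (d ^ n)
  | 0 => by simp [polyIt]
  | n + 1 => by
      rw [polyIt, polyIt_X_pow d n, X_pow_comp, ← pow_mul, ← pow_succ]

open Polynomial in
lemma polyIt_facts {R : Type*} [CommRing R] [IsDomain R] {P : R[X]} {d : ℕ} {c : R} (hd : 2 ≤ d)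
    (hdeg : P.natDegree = d) (hlc : P.leadingCoeff = c) :
    ∀ n, ∃ e : ℕ, (polyIt P n).natDegree = d ^ n ∧ (polyIt P n).leadingCoeff = c ^ e
  | 0 => ⟨0, by simp [polyIt]⟩
  | n + 1 => by
      obtain ⟨e, h1, h2⟩ := polyIt_facts hd hdeg hlc n
      refine ⟨1 + e * d, ?_, ?_⟩
      · rw [polyIt, natDegree_comp, hdeg, h1, pow_succ, mul_comm]
      · rw [polyIt, leadingCoeff_comp (by rw [h1]; positivity), hdeg, hlc, h2,
          ← pow_mul, ← pow_succ', Nat.add_comm]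


open Polynomial
variable {R S : Type*} [CommRing R] [CommRing S]

noncomputable def genPoly (d : ℕ) (b : Fin d → R) : R[X] :=
  ∑ i : Fin d, C (b i) * X ^ ((i : ℕ) + 1)

lemma genPoly_map (f : R →+* S) (d : ℕ) (b : Fin d → R) :
    (genPoly d b).map f = genPoly d (fun i => f (b i)) := by
  unfold genPoly
  rw [Polynomial.map_sum]
  simp [Polynomial.map_mul, Polynomial.map_pow]

lemma genPoly_coeff_high {d : ℕ} (b : Fin d → R) {k : ℕ} (hk : d < k) :
    (genPoly d b).coeff k = 0 := by
  unfold genPoly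
  rw [finset_sum_coeff]
  refine Finset.sum_eq_zero fun i _ => ?_
  rw [coeff_C_mul, coeff_X_pow, if_neg (by omega), mul_zero]

lemma genPoly_coeff_top {d : ℕ} (hd : 0 < d) (b : Fin d → R) :
    (genPoly d b).coeff d = b ⟨d - 1, by omega⟩ := by
  unfold genPoly
  rw [finset_sum_coeff]
  rw [Finset.sum_eq_single (⟨d - 1, by omega⟩ : Fin d)]
  · rw [coeff_C_mul, coeff_X_pow, if_pos (by simp; omega), mul_one]
  · intro i _ hi
    rw [coeff_C_mul, coeff_X_pow, if_neg, mul_zero]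
    intro h
    apply hi
    apply Fin.ext
    simp
    omega
  · simp

lemma genPoly_natDegree {d : ℕ} (hd : 0 < d) (b : Fin d → R)
    (hb : b ⟨d - 1, by omega⟩ ≠ 0) : (genPoly d b).natDegree = d := by
  refine le_antisymm (natDegree_le_iff_coeff_eq_zero.mpr fun k hk => genPoly_coeff_high b hk) ?_
  exact le_natDegree_of_ne_zero (by rw [genPoly_coeff_top hd b]; exact hb)

lemma genPoly_leadingCoeff {d : ℕ} (hd : 0 < d) (b : Fin d → R)
    (hb : b ⟨d - 1, by omega⟩ ≠ 0) : (genPoly d b).leadingCoeff = b ⟨d - 1, by omega⟩ := by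
  rw [leadingCoeff, genPoly_natDegree hd b hb, genPoly_coeff_top hd b]

end Aux


open Polynomial

universe u v

set_option maxHeartbeats 1000000
set_option synthInstance.maxHeartbeats 400000

/-- Key specialization lemma: if `Φ : T → K` is injective, `σ : T → ℚ` with `σ x` a unit,
and `z₀ ∈ K` is a root of a polynomial over `T` whose leading coefficient is a power of `x`,
then there is a char-zero field `Fq`, a point `w`, and a hom `Ψ : T → Fq` factoring through
`σ`, such that `w` satisfies every polynomial relation over `T` that `z₀` satisfies. -/
lemma exists_specialization {T : Type u} {K : Type v} [CommRing T] [IsDomain T] [Algebra ℚ T] [Field K]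
    {x : T} (hx0 : x ≠ 0) (Φ : T →+* K) (hΦinj : Function.Injective Φ)
    (hxK : IsUnit (Φ x)) (σ : T →+* ℚ) (hσx : IsUnit (σ x))
    {z₀ : K} {G : T[X]} {e : ℕ} (hlcG : G.leadingCoeff = x ^ e)
    (hroot : eval₂ Φ z₀ G = 0) :
    ∃ (Fq : Type v) (_ : Field Fq) (_ : CharZero Fq) (Ψ : T →+* Fq) (w : Fq),
      (∀ t : T, Ψ t = ((σ t : ℚ) : Fq)) ∧
      (∀ Q : T[X], eval₂ Φ z₀ Q = 0 → eval₂ Ψ w Q = 0) := by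
  classical
  have hMle : Submonoid.powers x ≤ nonZeroDivisors T :=
    powers_le_nonZeroDivisors_of_noZeroDivisors hx0
  set B := Localization.Away x with hB
  haveI : IsDomain B := IsLocalization.isDomain_localization hMle
  set ψ : T →+* B := algebraMap T B with hψ
  have hψinj : Function.Injective ψ := IsLocalization.injective B hMle
  set φK : B →+* K := IsLocalization.Away.lift x hxK with hφK
  have hφKcomp : ∀ t, φK (ψ t) = Φ t := fun t => IsLocalization.Away.lift_eq x hxK t
  have hφKinj : Function.Injective φK := by
    refine (IsLocalization.lift_injective_iff _).2 fun s t => ?_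
    exact ⟨fun h => congrArg Φ (hψinj h), fun h => congrArg ψ (hΦinj h)⟩
  letI : Algebra B K := φK.toAlgebra
  have hφKalg : algebraMap B K = φK := rfl
  -- `z₀` is integral over `B`
  set u : B := (IsLocalization.Away.invSelf x : B) ^ e with hu
  set F : Polynomial B := Polynomial.C u * (G.map ψ) with hF
  have hFmonic : F.Monic := by
    show F.leadingCoeff = 1
    rw [hF, leadingCoeff_mul, leadingCoeff_C, leadingCoeff_map_of_injective hψinj, hlcG, hu,
      map_pow, ← mul_pow, mul_comm, IsLocalization.Away.mul_invSelf, one_pow]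
  have hFroot : eval₂ (algebraMap B K) z₀ F = 0 := by
    rw [hF, eval₂_mul, eval₂_C, eval₂_map, hφKalg]
    have : φK.comp ψ = Φ := RingHom.ext hφKcomp
    rw [this, hroot, mul_zero]
  have hint : IsIntegral B z₀ := ⟨F, hFmonic, hFroot⟩
  set S : Subalgebra B K := Algebra.adjoin B ({z₀} : Set K) with hS
  haveI : Algebra.IsIntegral B S := Algebra.IsIntegral.adjoin (by
    rintro y hy
    rw [Set.mem_singleton_iff] at hy
    subst hy
    exact hint)
  have hcoeS : ∀ b : B, ((algebraMap B S b : S) : K) = φK b := fun b => rfl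
  have hSinj : Function.Injective (algebraMap B S) := by
    intro b₁ b₂ h
    apply hφKinj
    rw [← hcoeS, ← hcoeS, h]
  -- the specialization on `B` and lying over
  set φB : B →+* ℚ := IsLocalization.Away.lift x hσx with hφB
  have hφBcomp : ∀ t : T, φB (ψ t) = σ t := fun t => IsLocalization.Away.lift_eq x hσx t
  have hφBsurj : Function.Surjective φB := by
    intro r
    have hur : IsUnit ((1 : ℚ)) := isUnit_one
    obtain ⟨t, ht⟩ : ∃ t : T, σ t = r := by
      refine ⟨algebraMap ℚ T r, ?_⟩
      have : σ.comp (algebraMap ℚ T) = RingHom.id ℚ := Subsingleton.elim _ _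
      exact RingHom.congr_fun this r
    exact ⟨ψ t, by rw [hφBcomp, ht]⟩
  set p : Ideal B := RingHom.ker φB with hp
  haveI hpmax : p.IsMaximal := RingHom.ker_isMaximal_of_surjective φB hφBsurj
  obtain ⟨q, hqmax, hqcomap⟩ :=
    Ideal.exists_ideal_over_maximal_of_isIntegral (S := S) p (by
      intro b hb
      rw [RingHom.mem_ker] at hb
      have hb0 : b = 0 := hSinj (by rw [hb, map_zero])
      rw [hb0]
      exact p.zero_mem)
  haveI := hqmax
  letI Fq := S ⧸ q
  letI : Field Fq := Ideal.Quotient.field q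
  set ρ : S →+* Fq := Ideal.Quotient.mk q with hρ
  set θ : B →+* Fq := ρ.comp (algebraMap B S) with hθ
  have hθp : ∀ b : B, φB b = 0 → θ b = 0 := by
    intro b hb
    have hbp : b ∈ p := hb
    have hmem : b ∈ q.comap (algebraMap B S) := by rw [hqcomap]; exact hbp
    rw [Ideal.mem_comap] at hmem
    exact Ideal.Quotient.eq_zero_iff_mem.mpr hmem
  set cB : ℚ →+* B := ψ.comp (algebraMap ℚ T) with hcB
  have hretract : ∀ r : ℚ, φB (cB r) = r := by
    intro r
    have h : φB.comp cB = RingHom.id ℚ := Subsingleton.elim _ _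
    exact RingHom.congr_fun h r
  have hθfact : ∀ b : B, θ b = θ (cB (φB b)) := by
    intro b
    have h0 : θ (b - cB (φB b)) = 0 := hθp _ (by rw [map_sub, hretract, sub_self])
    rw [map_sub, sub_eq_zero] at h0
    exact h0
  haveI : CharZero Fq := by
    refine ⟨fun s t h => ?_⟩
    set θQ : ℚ →+* Fq := θ.comp cB with hθQ
    have : θQ (s : ℚ) = θQ (t : ℚ) := by rw [map_natCast, map_natCast]; exact h
    exact_mod_cast θQ.injective this
  have hcast : ∀ r : ℚ, θ (cB r) = (r : Fq) := by
    intro r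
    have h : θ.comp cB = Rat.castHom Fq := Subsingleton.elim _ _
    exact RingHom.congr_fun h r
  set Ψ : T →+* Fq := θ.comp ψ with hΨ
  set ΦS : T →+* S := (algebraMap B S).comp ψ with hΦS
  set ι : S →+* K := S.val.toRingHom with hι
  have hιinj : Function.Injective ι := Subtype.val_injective
  have hιΦS : ι.comp ΦS = Φ := by
    ext t
    show ((algebraMap B S (ψ t) : S) : K) = Φ t
    rw [hcoeS, hφKcomp]
  set z' : S := ⟨z₀, Algebra.subset_adjoin rfl⟩ with hz'
  refine ⟨Fq, inferInstance, inferInstance, Ψ, ρ z', ?_, ?_⟩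
  · intro t
    rw [hΨ, RingHom.comp_apply, hθfact, hφBcomp, hcast]
  · intro Q hQ
    have hQS : eval₂ ΦS z' Q = 0 := by
      apply hιinj
      rw [map_zero, Polynomial.hom_eval₂, hιΦS]
      exact hQ
    have : Ψ = ρ.comp ΦS := rfl
    rw [this, ← Polynomial.hom_eval₂, hQS, map_zero]

/-- Let `K` be a field of characteristic zero and `a₁, …, a_d ∈ K` (with `d ≥ 2`)
algebraically independent over `ℚ`.  Then `P(z) = a₁z + ⋯ + a_d z^d` has no parabolic
periodic point: no `z₀` with `P^n(z₀) = z₀` (`n ≥ 1`) whose multiplier `(P^n)'(z₀)` is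
a root of unity. -/
theorem stmt17 {K : Type*} [Field K] [CharZero K] (d : ℕ) (hd : 2 ≤ d)
    (a : Fin d → K) (ha : AlgebraicIndependent ℚ a) :
    ¬ ∃ (z₀ : K) (n : ℕ), 1 ≤ n ∧
      (polyIt (∑ i : Fin d, Polynomial.C (a i) * Polynomial.X ^ ((i : ℕ) + 1)) n).eval z₀ = z₀ ∧
      ∃ m : ℕ, 1 ≤ m ∧
        ((polyIt (∑ i : Fin d, Polynomial.C (a i) * Polynomial.X ^ ((i : ℕ) + 1)) n).derivative.eval
          z₀) ^ m = 1 := by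
  classical
  rintro ⟨z₀, n, hn, h1, m, hm, h2⟩
  rw [show (∑ i : Fin d, Polynomial.C (a i) * Polynomial.X ^ ((i : ℕ) + 1)) = genPoly d a
    from rfl] at h1 h2
  have hd0 : 0 < d := by omega
  set i₀ : Fin d := ⟨d - 1, by omega⟩ with hi₀
  set x : MvPolynomial (Fin d) ℚ := MvPolynomial.X i₀ with hx
  have hx0 : x ≠ 0 := MvPolynomial.X_ne_zero i₀
  -- the generic polynomial
  set Pgen : Polynomial (MvPolynomial (Fin d) ℚ) :=
    genPoly d (fun i => MvPolynomial.X i) with hPgen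
  have hΦinj : Function.Injective (MvPolynomial.aeval (R := ℚ) a) := ha
  set Φ : MvPolynomial (Fin d) ℚ →+* K := (MvPolynomial.aeval (R := ℚ) a).toRingHom with hΦ
  have hΦinj' : Function.Injective Φ := hΦinj
  have hai₀ : a i₀ ≠ 0 := by
    intro h
    have hxz : (MvPolynomial.aeval (R := ℚ) a) x = (MvPolynomial.aeval (R := ℚ) a) 0 := by
      rw [hx, map_zero, MvPolynomial.aeval_X]
      exact h
    exact hx0 (hΦinj hxz)
  have hxunit : IsUnit (Φ x) := by
    rw [hΦ, hx]
    refine isUnit_iff_ne_zero.mpr ?_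
    rw [show ((MvPolynomial.aeval (R := ℚ) a).toRingHom : MvPolynomial (Fin d) ℚ →+* K)
      (MvPolynomial.X i₀) = a i₀ from MvPolynomial.aeval_X a i₀]
    exact hai₀
  have hPmap : Pgen.map Φ = genPoly d a := by
    rw [hPgen, genPoly_map]
    congr 1
    funext i
    exact MvPolynomial.aeval_X a i
  -- degree facts for the generic polynomial
  have hdegPgen : Pgen.natDegree = d := genPoly_natDegree hd0 _ (by exact hx0)
  have hlcPgen : Pgen.leadingCoeff = x := genPoly_leadingCoeff hd0 _ (by exact hx0)
  obtain ⟨e, hdegIt, hlcIt⟩ := polyIt_facts hd hdegPgen hlcPgen n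
  have hdn2 : 2 ≤ d ^ n := le_trans hd (by calc d = d ^ 1 := (pow_one d).symm
                                               _ ≤ d ^ n := Nat.pow_le_pow_right (by omega) hn)
  -- G = P^n - X over the generic ring
  set G : Polynomial (MvPolynomial (Fin d) ℚ) := polyIt Pgen n - Polynomial.X with hG
  have hItne : polyIt Pgen n ≠ 0 := by
    intro h
    rw [h] at hdegIt
    simp at hdegIt
    omega
  have hdegX : (Polynomial.X : Polynomial (MvPolynomial (Fin d) ℚ)).degree
      < (polyIt Pgen n).degree := by
    rw [Polynomial.degree_X, Polynomial.degree_eq_natDegree hItne, hdegIt]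
    exact_mod_cast by omega
  have hlcG : G.leadingCoeff = x ^ e := by
    rw [hG, Polynomial.leadingCoeff_sub_of_degree_lt hdegX, hlcIt]
  -- the specialization sending `a` to `(0, …, 0, 1)`
  set c : Fin d → ℚ := fun i => if i = i₀ then 1 else 0 with hc
  set σ : MvPolynomial (Fin d) ℚ →+* ℚ := (MvPolynomial.aeval (R := ℚ) c).toRingHom with hσ
  have hσX : ∀ i, σ (MvPolynomial.X i) = c i := fun i => MvPolynomial.aeval_X c i
  have hσx : IsUnit (σ x) := by
    rw [hx, hσX, hc]
    simp
  -- the two dynamical relations, in `eval₂` form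
  have hroot : Polynomial.eval₂ Φ z₀ G = 0 := by
    rw [hG, Polynomial.eval₂_eq_eval_map, Polynomial.map_sub, polyIt_map, hPmap,
      Polynomial.map_X, Polynomial.eval_sub, Polynomial.eval_X, h1, sub_self]
  have hroot2 : Polynomial.eval₂ Φ z₀
      ((Polynomial.derivative (polyIt Pgen n)) ^ m - 1) = 0 := by
    rw [Polynomial.eval₂_eq_eval_map, Polynomial.map_sub, Polynomial.map_pow,
      Polynomial.map_one, ← Polynomial.derivative_map, polyIt_map, hPmap,
      Polynomial.eval_sub, Polynomial.eval_pow, Polynomial.eval_one, h2, sub_self]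
  -- specialize
  obtain ⟨Fq, _, _, Ψ, w, hΨval, htrans⟩ :=
    exists_specialization hx0 Φ hΦinj' hxunit σ hσx hlcG hroot
  have hΨX : ∀ i : Fin d, Ψ (MvPolynomial.X i) = if i = i₀ then 1 else 0 := by
    intro i
    rw [hΨval, hσX, hc]
    by_cases hi : i = i₀ <;> simp [hi]
  have hmapΨ : Pgen.map Ψ = Polynomial.X ^ d := by
    rw [hPgen, genPoly_map]
    unfold genPoly
    rw [Finset.sum_eq_single i₀]
    · simp only [hΨX, if_true, map_one, one_mul]
      congr 1
      simp only [hi₀, Fin.val_mk]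
      omega
    · intro i _ hi
      simp only [hΨX, if_neg hi, map_zero, zero_mul]
    · simp
  have hitΨ : (polyIt Pgen n).map Ψ = Polynomial.X ^ (d ^ n) := by
    rw [polyIt_map, hmapΨ, polyIt_X_pow]
  -- the two relations in `Fq`
  have hF1 : w ^ (d ^ n) = w := by
    have hE := htrans G hroot
    rw [hG, Polynomial.eval₂_eq_eval_map, Polynomial.map_sub, hitΨ, Polynomial.map_X,
      Polynomial.eval_sub, Polynomial.eval_pow, Polynomial.eval_X, sub_eq_zero] at hE
    exact hE
  have hF2 : (((d ^ n : ℕ) : Fq) * w ^ (d ^ n - 1)) ^ m = 1 := by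
    have hE := htrans _ hroot2
    rw [Polynomial.eval₂_eq_eval_map, Polynomial.map_sub, Polynomial.map_pow,
      Polynomial.map_one, ← Polynomial.derivative_map, hitΨ, Polynomial.derivative_X_pow,
      Polynomial.eval_sub, Polynomial.eval_pow, Polynomial.eval_one, sub_eq_zero,
      Polynomial.eval_mul, Polynomial.eval_C, Polynomial.eval_pow, Polynomial.eval_X] at hE
    exact hE
  -- contradiction
  have hw0 : w ≠ 0 := by
    intro h
    rw [h, zero_pow (show d ^ n - 1 ≠ 0 by omega), mul_zero,
      zero_pow (show m ≠ 0 by omega)] at hF2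
    exact zero_ne_one hF2
  have hw1 : w ^ (d ^ n - 1) = 1 := by
    have hstep : w ^ (d ^ n - 1) * w = 1 * w := by
      rw [one_mul, ← pow_succ, show d ^ n - 1 + 1 = d ^ n from by omega]
      exact hF1
    exact mul_right_cancel₀ hw0 hstep
  rw [hw1, mul_one, ← Nat.cast_pow] at hF2
  have hcast1 : ((d ^ n) ^ m : ℕ) = 1 := by exact_mod_cast hF2
  have h2le : 2 ≤ (d ^ n) ^ m := le_trans hdn2 (Nat.le_self_pow (by omega) _)
  omega
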